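/- Let P ≥ 1 be an integer and m ∈ (-1,1) a real number. Let M̄ ∈ ℝ^{P×P} be the strictly upper-triangular matrix with M̄_{ij} = m for i < j and 0 otherwise. Then I + M̄ is invertible and its inverse has entries [(I + M̄)^{-1}]_{ij} = δ_{ij} - m·[j > i]·(1-m)^{j-i-1}, where [j > i] equals 1 if j > i and 0 otherwise, and δ_{ij} is the Kronecker delta. -/

import Mathlib

open Matrix BigOperators

/-- `M̄`: the strictly upper-triangular matrix whose entries above the diagonal all equal `m`. -/
noncomputable def Mbar (P : ℕ) (m : ℝ) : Matrix (Fin P) (Fin P) ℝ :=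
  Matrix.of fun i j => if (i : ℕ) < (j : ℕ) then m else 0

/-- The candidate inverse of `1 + Mbar P m`. -/
noncomputable def Binv (P : ℕ) (m : ℝ) : Matrix (Fin P) (Fin P) ℝ :=
  Matrix.of fun i j =>
    (if i = j then (1 : ℝ) else 0)
      - m * (if (i : ℕ) < (j : ℕ) then (1 : ℝ) else 0) *
        (1 - m) ^ ((j : ℕ) - (i : ℕ) - 1)

private lemma filter_range_lt (P i : ℕ) :
    (Finset.range P).filter (fun k => i < k) = Finset.Ico (i + 1) P := by
  ext k
  simp only [Finset.mem_filter, Finset.mem_range, Finset.mem_Ico]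
  omega

private lemma key_sum (m : ℝ) (P i j : ℕ) (hi : i < P) (hj : j < P) :
    ∑ k ∈ Finset.range P,
      ((if i = k then (1 : ℝ) else 0) + (if i < k then m else 0)) *
        ((if k = j then (1 : ℝ) else 0)
          - m * (if k < j then (1 : ℝ) else 0) * (1 - m) ^ (j - k - 1))
    = if i = j then 1 else 0 := by
  set b : ℕ → ℝ := fun k =>
    (if k = j then (1 : ℝ) else 0)
      - m * (if k < j then (1 : ℝ) else 0) * (1 - m) ^ (j - k - 1) with hb
  have hsplit :
      ∑ k ∈ Finset.range P,
        ((if i = k then (1 : ℝ) else 0) + (if i < k then m else 0)) * b k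
      = (∑ k ∈ Finset.range P, (if i = k then b k else 0))
        + ∑ k ∈ Finset.range P, (if i < k then m * b k else 0) := by
    rw [← Finset.sum_add_distrib]
    refine Finset.sum_congr rfl fun k _ => ?_
    by_cases h1 : i = k <;> by_cases h2 : i < k <;> simp [h1, h2] <;> ring
  have h1 : ∑ k ∈ Finset.range P, (if i = k then b k else 0) = b i := by
    rw [Finset.sum_ite_eq]
    simp [Finset.mem_range.mpr hi]
  have h2 : ∑ k ∈ Finset.range P, (if i < k then m * b k else 0)
      = m * ∑ k ∈ Finset.Ico (i + 1) P, b k := by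
    rw [← Finset.sum_filter, filter_range_lt, Finset.mul_sum]
  -- compute the tail sum
  have hδ : ∑ k ∈ Finset.Ico (i + 1) P, (if k = j then (1 : ℝ) else 0)
      = if i < j then 1 else 0 := by
    rw [Finset.sum_ite_eq']
    simp only [Finset.mem_Ico]
    by_cases h : i < j
    · simp [h, hj, Nat.succ_le_iff]
    · simp [h]
  have hgeo : ∑ k ∈ Finset.Ico (i + 1) P,
      (m * (if k < j then (1 : ℝ) else 0) * (1 - m) ^ (j - k - 1))
      = m * ∑ t ∈ Finset.range (j - i - 1), (1 - m) ^ t := by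
    have e1 : ∑ k ∈ Finset.Ico (i + 1) P,
        (m * (if k < j then (1 : ℝ) else 0) * (1 - m) ^ (j - k - 1))
        = ∑ k ∈ Finset.Ico (i + 1) P,
            (if k < j then m * (1 - m) ^ (j - k - 1) else 0) := by
      refine Finset.sum_congr rfl fun k _ => ?_
      by_cases h : k < j <;> simp [h]
    rw [e1, ← Finset.sum_filter, Finset.Ico_filter_lt, min_eq_right hj.le,
      Finset.sum_Ico_eq_sum_range, ← Finset.mul_sum]
    congr 1
    rw [← Finset.sum_range_reflect]
    refine Finset.sum_congr rfl fun t ht => ?_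
    congr 1
    simp only [Finset.mem_range] at ht
    omega
  have htail : ∑ k ∈ Finset.Ico (i + 1) P, b k
      = (if i < j then 1 else 0) - m * ∑ t ∈ Finset.range (j - i - 1), (1 - m) ^ t := by
    rw [hb]
    rw [Finset.sum_sub_distrib, hδ, hgeo]
  rw [hsplit, h1, h2, htail]
  rcases lt_trichotomy i j with h | h | h
  · have hne : i ≠ j := h.ne
    have hm : m * ∑ t ∈ Finset.range (j - i - 1), (1 - m) ^ t
        = 1 - (1 - m) ^ (j - i - 1) := by
      have := geom_sum_mul (1 - m) (j - i - 1)
      linarith [this]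
    simp only [hb, hne, h, if_true, if_false]
    rw [hm]
    ring
  · subst h
    simp [hb, lt_irrefl]
  · have hne : i ≠ j := h.ne'
    have h' : ¬ i < j := not_lt.mpr h.le
    have hempty : j - i - 1 = 0 := by omega
    simp [hb, hne, h', hempty]

theorem inverse_of_one_add_Mbar
    (P : ℕ) (hP : 1 ≤ P) (m : ℝ) (hm : -1 < m) (hm' : m < 1) :
    IsUnit (1 + Mbar P m) ∧
      ∀ i j : Fin P,
        (1 + Mbar P m)⁻¹ i j =
          (if i = j then (1 : ℝ) else 0)
            - m * (if (i : ℕ) < (j : ℕ) then (1 : ℝ) else 0) *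
              (1 - m) ^ ((j : ℕ) - (i : ℕ) - 1) := by
  have hmul : (1 + Mbar P m) * Binv P m = 1 := by
    ext i j
    rw [Matrix.mul_apply]
    have : ∀ k : Fin P,
        (1 + Mbar P m) i k * Binv P m k j
        = ((if (i : ℕ) = (k : ℕ) then (1 : ℝ) else 0) + (if (i : ℕ) < (k : ℕ) then m else 0)) *
            ((if (k : ℕ) = (j : ℕ) then (1 : ℝ) else 0)
              - m * (if (k : ℕ) < (j : ℕ) then (1 : ℝ) else 0) * (1 - m) ^ ((j : ℕ) - (k : ℕ) - 1)) := by
      intro k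
      simp [Mbar, Binv, Matrix.add_apply, Matrix.one_apply, Fin.ext_iff]
    rw [Finset.sum_congr rfl fun k _ => this k]
    rw [Fin.sum_univ_eq_sum_range (fun k =>
        ((if (i : ℕ) = k then (1 : ℝ) else 0) + (if (i : ℕ) < k then m else 0)) *
          ((if k = (j : ℕ) then (1 : ℝ) else 0)
            - m * (if k < (j : ℕ) then (1 : ℝ) else 0) * (1 - m) ^ ((j : ℕ) - k - 1)))]
    rw [key_sum m P i j i.isLt j.isLt]
    simp [Matrix.one_apply, Fin.ext_iff]
  refine ⟨(Matrix.isUnit_iff_isUnit_det _).mpr (Matrix.isUnit_det_of_right_inverse hmul), fun i j => ?_⟩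
  rw [Matrix.inv_eq_right_inv hmul]
  rfl
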